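/- Suppose S₀ is Hermitian positive semidefinite with tr(S₀) ≤ P and S₀ attains the maximum of min over i = 1,…,K of det(I + H_sᴴ S H_s)/(1 + (h_iᴴ S h_i)/σ_i²) over the feasible set { S : S Hermitian PSD, tr(S) ≤ P }. Set Γ̄_i = h_iᴴ S₀ h_i. Then: (a) g(Γ̄_1,…,Γ̄_K) = det(I + H_sᴴ S₀ H_s); and (b) the vector (Γ̄_1,…,Γ̄_K) attains the maximum of min over i of g(Γ_1,…,Γ_K)/(1 + Γ_i/σ_i²) over all Γ with Γ_i ≥ 0, i.e., for every Γ with Γ_i ≥ 0 for all i, min_i g(Γ_1,…,Γ_K)/(1 + Γ_i/σ_i²) ≤ min_i g(Γ̄_1,…,Γ̄_K)/(1 + Γ̄_i/σ_i²). -/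

import Mathlib

open Matrix ComplexOrder

/-- The (real) quadratic form `hᴴ S h`. -/
noncomputable def quadForm {N : ℕ} (h : Fin N → ℂ) (S : Matrix (Fin N) (Fin N) ℂ) : ℝ :=
  (star h ⬝ᵥ S.mulVec h).re

/-- The (real) value `det(I + Hsᴴ S Hs)`. -/
noncomputable def detVal {N M : ℕ} (Hs : Matrix (Fin N) (Fin M) ℂ)
    (S : Matrix (Fin N) (Fin N) ℂ) : ℝ :=
  ((1 + Hs.conjTranspose * S * Hs).det).re

/-- `g(Γ₁,…,Γ_K)`: the optimal value of the CR spectrum sharing problem. -/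
noncomputable def gFun {N M K : ℕ} (Hs : Matrix (Fin N) (Fin M) ℂ) (h : Fin K → Fin N → ℂ)
    (P : ℝ) (Γ : Fin K → ℝ) : ℝ :=
  sSup {x : ℝ | ∃ S : Matrix (Fin N) (Fin N) ℂ, S.PosSemidef ∧ S.trace.re ≤ P ∧
    (∀ i, quadForm (h i) S ≤ Γ i) ∧ x = detVal Hs S}

lemma quadForm_nonneg {N : ℕ} (h : Fin N → ℂ) {S : Matrix (Fin N) (Fin N) ℂ}
    (hS : S.PosSemidef) : 0 ≤ quadForm h S := by
  have := hS.dotProduct_mulVec_nonneg h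
  simpa [quadForm] using (Complex.le_def.mp this).1

lemma detVal_nonneg {N M : ℕ} (Hs : Matrix (Fin N) (Fin M) ℂ)
    {S : Matrix (Fin N) (Fin N) ℂ} (hS : S.PosSemidef) : 0 ≤ detVal Hs S := by
  have h1 : (Hs.conjTranspose * S * Hs).PosSemidef := by
    simpa using hS.conjTranspose_mul_mul_same Hs
  have h2 : (1 + Hs.conjTranspose * S * Hs).PosDef :=
    Matrix.PosDef.add_posSemidef Matrix.PosDef.one h1
  have := h2.det_pos
  exact le_of_lt (by simpa [detVal] using (Complex.lt_def.mp this).1)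

theorem stmt_2 (N M K : ℕ) [NeZero K] (hN : 0 < N) (hM : 0 < M)
    (P : ℝ) (hP : 0 < P) (σ : Fin K → ℝ) (hσ : ∀ i, 0 < σ i)
    (Hs : Matrix (Fin N) (Fin M) ℂ) (h : Fin K → Fin N → ℂ)
    (S₀ : Matrix (Fin N) (Fin N) ℂ) (hS₀ : S₀.PosSemidef) (htr₀ : S₀.trace.re ≤ P)
    (hopt : ∀ S : Matrix (Fin N) (Fin N) ℂ, S.PosSemidef → S.trace.re ≤ P →
      (⨅ i : Fin K, detVal Hs S / (1 + quadForm (h i) S / (σ i) ^ 2)) ≤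
      (⨅ i : Fin K, detVal Hs S₀ / (1 + quadForm (h i) S₀ / (σ i) ^ 2))) :
    gFun Hs h P (fun i => quadForm (h i) S₀) = detVal Hs S₀ ∧
    ∀ Γ : Fin K → ℝ, (∀ i, 0 ≤ Γ i) →
      (⨅ i : Fin K, gFun Hs h P Γ / (1 + Γ i / (σ i) ^ 2)) ≤
      (⨅ i : Fin K, gFun Hs h P (fun j => quadForm (h j) S₀) /
        (1 + quadForm (h i) S₀ / (σ i) ^ 2)) := by
  have hσ2 : ∀ i, 0 < (σ i) ^ 2 := fun i => pow_pos (hσ i) 2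
  -- denominators for S₀
  set D : Fin K → ℝ := fun i => 1 + quadForm (h i) S₀ / (σ i) ^ 2 with hD
  have hDpos : ∀ i, 0 < D i := fun i => by
    have := div_nonneg (quadForm_nonneg (h i) hS₀) (hσ2 i).le
    simp only [hD]; linarith
  -- pick j₀ maximizing quadForm (h i) S₀ / σ i ^ 2
  obtain ⟨j₀, hj₀⟩ := Finite.exists_max (fun i : Fin K => quadForm (h i) S₀ / (σ i) ^ 2)
  have hDj₀ : ∀ i, D i ≤ D j₀ := fun i => by
    simp only [hD]; linarith [hj₀ i]
  -- Part (a): the sup set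
  have key : ∀ S : Matrix (Fin N) (Fin N) ℂ, S.PosSemidef → S.trace.re ≤ P →
      (∀ i, quadForm (h i) S ≤ quadForm (h i) S₀) → detVal Hs S ≤ detVal Hs S₀ := by
    intro S hS htr hq
    have hd : detVal Hs S / D j₀ ≤ detVal Hs S₀ / D j₀ := by
      calc detVal Hs S / D j₀
          ≤ ⨅ i : Fin K, detVal Hs S / (1 + quadForm (h i) S / (σ i) ^ 2) := by
            apply le_ciInf
            intro i
            apply div_le_div_of_nonneg_left (detVal_nonneg Hs hS)
            · have := div_nonneg (quadForm_nonneg (h i) hS) (hσ2 i).le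
              linarith
            · have h1 : quadForm (h i) S / (σ i) ^ 2 ≤ quadForm (h i) S₀ / (σ i) ^ 2 :=
                div_le_div_of_nonneg_right (hq i) (hσ2 i).le |>.trans_eq rfl
              have := hDj₀ i
              simp only [hD] at this ⊢
              linarith
        _ ≤ ⨅ i : Fin K, detVal Hs S₀ / (1 + quadForm (h i) S₀ / (σ i) ^ 2) := hopt S hS htr
        _ ≤ detVal Hs S₀ / D j₀ := ciInf_le (Finite.bddBelow_range _) j₀
    exact (div_le_div_iff_of_pos_right (hDpos j₀)).mp hd
  have hmem : detVal Hs S₀ ∈ {x : ℝ | ∃ S : Matrix (Fin N) (Fin N) ℂ, S.PosSemidef ∧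
      S.trace.re ≤ P ∧ (∀ i, quadForm (h i) S ≤ quadForm (h i) S₀) ∧ x = detVal Hs S} :=
    ⟨S₀, hS₀, htr₀, fun i => le_refl _, rfl⟩
  have hub : ∀ x ∈ {x : ℝ | ∃ S : Matrix (Fin N) (Fin N) ℂ, S.PosSemidef ∧
      S.trace.re ≤ P ∧ (∀ i, quadForm (h i) S ≤ quadForm (h i) S₀) ∧ x = detVal Hs S},
      x ≤ detVal Hs S₀ := by
    rintro x ⟨S, hS, htr, hq, rfl⟩
    exact key S hS htr hq
  have parta : gFun Hs h P (fun i => quadForm (h i) S₀) = detVal Hs S₀ := by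
    apply IsGreatest.csSup_eq
    exact ⟨hmem, hub⟩
  refine ⟨parta, ?_⟩
  -- Part (b)
  intro Γ hΓ
  have hRHS : (⨅ i : Fin K, gFun Hs h P (fun j => quadForm (h j) S₀) /
      (1 + quadForm (h i) S₀ / (σ i) ^ 2)) =
      ⨅ i : Fin K, detVal Hs S₀ / D i := by
    rw [parta]
  rw [hRHS]
  set V : ℝ := ⨅ i : Fin K, detVal Hs S₀ / D i with hV
  -- pick j maximizing Γ i / σ i ^ 2
  obtain ⟨j, hj⟩ := Finite.exists_max (fun i : Fin K => Γ i / (σ i) ^ 2)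
  set E : Fin K → ℝ := fun i => 1 + Γ i / (σ i) ^ 2 with hE
  have hEpos : ∀ i, 0 < E i := fun i => by
    have := div_nonneg (hΓ i) (hσ2 i).le
    simp only [hE]; linarith
  -- g(Γ) ≤ V * E j
  have hgub : gFun Hs h P Γ ≤ V * E j := by
    apply csSup_le
    · exact ⟨detVal Hs 0, 0, Matrix.PosSemidef.zero, by simp [hP.le],
        fun i => by simp [quadForm, hΓ i], rfl⟩
    rintro x ⟨S, hS, htr, hq, rfl⟩
    have hd : detVal Hs S / E j ≤ V := by
      calc detVal Hs S / E j
          ≤ ⨅ i : Fin K, detVal Hs S / (1 + quadForm (h i) S / (σ i) ^ 2) := by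
            apply le_ciInf
            intro i
            apply div_le_div_of_nonneg_left (detVal_nonneg Hs hS)
            · have := div_nonneg (quadForm_nonneg (h i) hS) (hσ2 i).le
              linarith
            · have h1 : quadForm (h i) S / (σ i) ^ 2 ≤ Γ i / (σ i) ^ 2 :=
                div_le_div_of_nonneg_right (hq i) (hσ2 i).le
              have h2 := hj i
              simp only [hE]
              linarith
        _ ≤ ⨅ i : Fin K, detVal Hs S₀ / (1 + quadForm (h i) S₀ / (σ i) ^ 2) := hopt S hS htr
        _ = V := rfl
    exact (div_le_iff₀ (hEpos j)).mp hd
  calc (⨅ i : Fin K, gFun Hs h P Γ / (1 + Γ i / (σ i) ^ 2))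
      ≤ gFun Hs h P Γ / E j := ciInf_le (Finite.bddBelow_range _) j
    _ ≤ V := (div_le_iff₀ (hEpos j)).mpr hgub
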